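/- Let X_i ⊂ {0,1}^{d_i}, X_j ⊂ {0,1}^{d_j} be finite nonempty sets with binary coupling matrices A_i, A_j mapping them into {0,1}^K, and let θ_i, θ_j be cost vectors. Suppose there exist x* ∈ argmin_{x∈X_i}⟨θ_i,x⟩ and y* ∈ argmin_{y∈X_j}⟨θ_j,y⟩ with A_i x* = A_j y* (marginal consistency on the edge ij). If Δ ∈ ℝ^K satisfies the sign conditions relative to ν := A_i x* (Δ(s) ≥ 0 when ν(s)=1, Δ(s) ≤ 0 when ν(s)=0) and x* remains optimal for θ_i + A_iᵀΔ, then min_{x∈X_i}⟨θ_i,x⟩ + min_{y∈X_j}⟨θ_j,y⟩ = min_{x∈X_i}⟨θ_i + A_iᵀΔ,x⟩ + min_{y∈X_j}⟨θ_j − A_jᵀΔ,y⟩, and moreover x* and y* remain optimal for the updated costs. -/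

import Mathlib

open Matrix in
/-- Fixed-point property (core of Theorem 2): under marginal consistency on an
edge, any admissible message update leaves the dual lower bound unchanged and
preserves the consistent pair of minimizers. -/
theorem marginal_consistency_fixed_point
    (di dj K : ℕ)
    (Xi : Finset (Fin di → ℝ)) (hXi : Xi.Nonempty)
    (Xj : Finset (Fin dj → ℝ)) (hXj : Xj.Nonempty)
    (hXibin : ∀ x ∈ Xi, ∀ t, x t = 0 ∨ x t = 1)
    (hXjbin : ∀ y ∈ Xj, ∀ t, y t = 0 ∨ y t = 1)
    (Ai : Matrix (Fin K) (Fin di) ℝ) (Aj : Matrix (Fin K) (Fin dj) ℝ)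
    (hAi : ∀ x ∈ Xi, ∀ s, Ai.mulVec x s = 0 ∨ Ai.mulVec x s = 1)
    (hAj : ∀ y ∈ Xj, ∀ s, Aj.mulVec y s = 0 ∨ Aj.mulVec y s = 1)
    (θi : Fin di → ℝ) (θj : Fin dj → ℝ)
    (xstar : Fin di → ℝ) (hxstar : xstar ∈ Xi)
    (ystar : Fin dj → ℝ) (hystar : ystar ∈ Xj)
    (hxmin : ∀ x ∈ Xi, dotProduct θi xstar ≤ dotProduct θi x)
    (hymin : ∀ y ∈ Xj, dotProduct θj ystar ≤ dotProduct θj y)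
    (hcons : Ai.mulVec xstar = Aj.mulVec ystar)
    (Δ : Fin K → ℝ)
    (hΔ : ∀ s, (Ai.mulVec xstar s = 1 → 0 ≤ Δ s) ∧ (Ai.mulVec xstar s = 0 → Δ s ≤ 0))
    (hxmin' : ∀ x ∈ Xi,
      dotProduct (θi + Ai.transpose.mulVec Δ) xstar ≤
        dotProduct (θi + Ai.transpose.mulVec Δ) x) :
    (Xi.inf' hXi (fun x => dotProduct θi x) +
        Xj.inf' hXj (fun y => dotProduct θj y) =
      Xi.inf' hXi (fun x => dotProduct (θi + Ai.transpose.mulVec Δ) x) +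
        Xj.inf' hXj (fun y => dotProduct (θj - Aj.transpose.mulVec Δ) y)) ∧
    (∀ y ∈ Xj,
      dotProduct (θj - Aj.transpose.mulVec Δ) ystar ≤
        dotProduct (θj - Aj.transpose.mulVec Δ) y) := by
  classical
  have key : ∀ (d : ℕ) (A : Matrix (Fin K) (Fin d) ℝ) (v : Fin d → ℝ),
      dotProduct (A.transpose.mulVec Δ) v = dotProduct Δ (A.mulVec v) := by
    intro d A v
    rw [Matrix.mulVec_transpose, ← Matrix.dotProduct_mulVec]
  -- Δ ⬝ Aj y ≤ Δ ⬝ Aj y* for any y ∈ Xj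
  have hΔle : ∀ y ∈ Xj, dotProduct Δ (Aj.mulVec y) ≤ dotProduct Δ (Aj.mulVec ystar) := by
    intro y hy
    apply Finset.sum_le_sum
    intro s _
    rcases hΔ s with ⟨h1, h0⟩
    rw [hcons] at h1 h0
    rcases hAj ystar hystar s with hs0 | hs1
    · rw [hs0]
      rcases hAj y hy s with hy0 | hy1
      · rw [hy0]
      · rw [hy1]; simpa using h0 hs0
    · rw [hs1]
      rcases hAj y hy s with hy0 | hy1
      · rw [hy0]; simpa using h1 hs1
      · rw [hy1]
  have hymin' : ∀ y ∈ Xj,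
      dotProduct (θj - Aj.transpose.mulVec Δ) ystar ≤
        dotProduct (θj - Aj.transpose.mulVec Δ) y := by
    intro y hy
    rw [sub_dotProduct, sub_dotProduct, key, key]
    have := hymin y hy
    have := hΔle y hy
    linarith
  refine ⟨?_, hymin'⟩
  have einf : ∀ (d : ℕ) (X : Finset (Fin d → ℝ)) (hX : X.Nonempty) (θ : Fin d → ℝ)
      (z : Fin d → ℝ) (hz : z ∈ X)
      (hmin : ∀ x ∈ X, dotProduct θ z ≤ dotProduct θ x),
      X.inf' hX (fun x => dotProduct θ x) = dotProduct θ z := by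
    intro d X hX θ z hz hmin
    exact le_antisymm (Finset.inf'_le _ hz) (Finset.le_inf' _ _ hmin)
  rw [einf di Xi hXi θi xstar hxstar hxmin, einf dj Xj hXj θj ystar hystar hymin,
    einf di Xi hXi _ xstar hxstar hxmin', einf dj Xj hXj _ ystar hystar hymin']
  rw [add_dotProduct, sub_dotProduct, key, key, hcons]
  ring
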